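/- Square-integrable envelope for the score: for every y ∈ ℝ, (f_G′(y)/f_G(y))² ≤ 2(y² + c²)/σ⁴. This bound holds uniformly over all Borel probability measures G supported in [-c, c]. -/

import Mathlib

open MeasureTheory Set

/-- The standard normal density `φ(z) = (2π)^{-1/2} e^{-z²/2}`. -/
noncomputable def stdNormalPDF (z : ℝ) : ℝ := (Real.sqrt (2 * Real.pi))⁻¹ * Real.exp (-z ^ 2 / 2)

/-- The mixture (marginal) density `f_G(y) = (1/σ) ∫ φ((y−θ)/σ) dG(θ)`. -/
noncomputable def mixDens (σ : ℝ) (G : Measure ℝ) (y : ℝ) : ℝ :=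
  (1 / σ) * ∫ θ, stdNormalPDF ((y - θ) / σ) ∂G

lemma stdNormalPDF_pos (z : ℝ) : 0 < stdNormalPDF z := by
  have : 0 < Real.sqrt (2 * Real.pi) := Real.sqrt_pos.2 (by positivity)
  exact mul_pos (inv_pos.2 this) (Real.exp_pos _)

lemma stdNormalPDF_le_one (z : ℝ) : stdNormalPDF z ≤ 1 := by
  have h1 : Real.sqrt (2 * Real.pi) ≥ 1 := by
    rw [show (1:ℝ) = Real.sqrt 1 by simp]
    exact Real.sqrt_le_sqrt (by nlinarith [Real.pi_gt_three])
  have h2 : (Real.sqrt (2 * Real.pi))⁻¹ ≤ 1 := by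
    rw [inv_le_one_iff₀]; right; exact h1
  have h3 : Real.exp (-z ^ 2 / 2) ≤ 1 := by
    rw [Real.exp_le_one_iff]; nlinarith [sq_nonneg z]
  calc stdNormalPDF z ≤ 1 * 1 := by
        unfold stdNormalPDF
        apply mul_le_mul h2 h3 (Real.exp_pos _).le zero_le_one
    _ = 1 := by ring

lemma stdNormalPDF_continuous : Continuous stdNormalPDF := by
  unfold stdNormalPDF
  exact continuous_const.mul (Real.continuous_exp.comp (by continuity))

lemma hasDerivAt_stdNormalPDF (z : ℝ) :
    HasDerivAt stdNormalPDF (-z * stdNormalPDF z) z := by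
  unfold stdNormalPDF
  have h : HasDerivAt (fun z : ℝ => -z ^ 2 / 2) (-z) z := by
    have := ((hasDerivAt_pow 2 z).neg).div_const 2
    simpa using this.congr_deriv (by push_cast; ring)
  have := (h.exp).const_mul ((Real.sqrt (2 * Real.pi))⁻¹)
  exact this.congr_deriv (by ring)

/-- antitone in |z| : if |a| ≤ |b| then pdf b ≤ pdf a -/
lemma stdNormalPDF_mono {a b : ℝ} (h : |a| ≤ |b|) : stdNormalPDF b ≤ stdNormalPDF a := by
  unfold stdNormalPDF
  have h2 : Real.exp (-b ^ 2 / 2) ≤ Real.exp (-a ^ 2 / 2) := by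
    apply Real.exp_le_exp.2
    nlinarith [sq_abs a, sq_abs b, pow_le_pow_left₀ (abs_nonneg a) h 2]
  have hpos : (0:ℝ) < Real.sqrt (2 * Real.pi) := Real.sqrt_pos.2 (by positivity)
  exact mul_le_mul_of_nonneg_left h2 (inv_pos.2 hpos).le

/-- **Square-integrable envelope for the score**: uniformly over all Borel probability
measures `G` supported in `[-c, c]`, `(f_G′(y)/f_G(y))² ≤ 2(y² + c²)/σ⁴` for every `y`. -/
theorem score_envelope (σ c : ℝ) (hσ : 0 < σ) (hc : 0 < c) :
    ∀ (G : Measure ℝ), IsProbabilityMeasure G → (∀ᵐ θ ∂G, θ ∈ Icc (-c) c) →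
      ∀ y : ℝ, (deriv (mixDens σ G) y / mixDens σ G y) ^ 2 ≤ 2 * (y ^ 2 + c ^ 2) / σ ^ 4 := by
  intro G hG hsupp y
  -- notation
  set F : ℝ → ℝ → ℝ := fun x θ => stdNormalPDF ((x - θ) / σ) with hF
  set F' : ℝ → ℝ → ℝ := fun x θ => (-(x - θ) / σ ^ 2) * stdNormalPDF ((x - θ) / σ) with hF'
  have hFmeas : ∀ x : ℝ, AEStronglyMeasurable (F x) G := by
    intro x
    exact (stdNormalPDF_continuous.comp (by continuity)).aestronglyMeasurable
  have hF'cont : ∀ x : ℝ, Continuous (F' x) := fun x =>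
    (((continuous_const.sub continuous_id).neg.div_const _).mul
      (stdNormalPDF_continuous.comp ((continuous_const.sub continuous_id).div_const _)))
  have hFint : ∀ x : ℝ, Integrable (F x) G := by
    intro x
    refine Integrable.mono' (integrable_const 1) (hFmeas x) ?_
    filter_upwards with θ
    rw [Real.norm_eq_abs, abs_of_pos (stdNormalPDF_pos _)]
    exact stdNormalPDF_le_one _
  -- differentiation under the integral sign
  have hderivF : ∀ (x θ : ℝ), HasDerivAt (fun x => F x θ) (F' x θ) x := by
    intro x θ
    have h1 : HasDerivAt (fun x : ℝ => (x - θ) / σ) (1 / σ) x := by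
      simpa using ((hasDerivAt_id x).sub_const θ).div_const σ
    have := (hasDerivAt_stdNormalPDF ((x - θ) / σ)).comp x h1
    have heq : F' x θ = -((x - θ) / σ) * stdNormalPDF ((x - θ) / σ) * (1 / σ) := by
      simp only [hF']; ring
    rw [heq]
    exact this
  have key : ∀ x : ℝ, HasDerivAt (fun x => ∫ θ, F x θ ∂G) (∫ θ, F' x θ ∂G) x := by
    intro x
    have := hasDerivAt_integral_of_dominated_loc_of_deriv_le (μ := G) (F := F) (F' := F')
      (x₀ := x) (bound := fun _ => (|x| + 1 + c) / σ ^ 2) (Metric.ball_mem_nhds x one_pos)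
      (Filter.Eventually.of_forall hFmeas) (hFint x)
      ((hF'cont x).aestronglyMeasurable) ?_ (integrable_const _)
      (Filter.Eventually.of_forall fun θ =>
        fun u _ => hderivF u θ)
    · exact this.2
    · filter_upwards [hsupp] with θ hθ u hu
      have hφ : stdNormalPDF ((u - θ) / σ) ≤ 1 := stdNormalPDF_le_one _
      have hφ0 : 0 < stdNormalPDF ((u - θ) / σ) := stdNormalPDF_pos _
      have hub : |u - θ| ≤ |x| + 1 + c := by
        have h1 : |u - x| < 1 := by simpa [Real.dist_eq] using Metric.mem_ball.mp hu
        have h2 : |θ| ≤ c := abs_le.2 ⟨hθ.1, hθ.2⟩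
        calc |u - θ| = |(u - x) + x + (-θ)| := by ring_nf
          _ ≤ |u - x| + |x| + |θ| := by
              calc |(u - x) + x + (-θ)| ≤ |(u - x) + x| + |(-θ)| := abs_add_le _ _
                _ ≤ |u - x| + |x| + |(-θ)| := by gcongr; exact abs_add_le _ _
                _ = |u - x| + |x| + |θ| := by rw [abs_neg]
          _ ≤ |x| + 1 + c := by linarith
      rw [Real.norm_eq_abs, hF', abs_mul, abs_of_pos hφ0]
      calc |(-(u - θ) / σ ^ 2)| * stdNormalPDF ((u - θ) / σ)
          ≤ |(-(u - θ) / σ ^ 2)| * 1 := by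
            exact mul_le_mul_of_nonneg_left hφ (abs_nonneg _)
        _ = |u - θ| / σ ^ 2 := by
            rw [mul_one, abs_div, abs_neg, abs_of_pos (by positivity : (0:ℝ) < σ ^ 2)]
        _ ≤ (|x| + 1 + c) / σ ^ 2 := by gcongr
  -- the derivative of mixDens
  have hmix : HasDerivAt (mixDens σ G) ((1 / σ) * ∫ θ, F' y θ ∂G) y := by
    have h := HasDerivAt.const_mul (1 / σ) (key y)
    have he : mixDens σ G = fun x => (1 / σ) * ∫ θ, F x θ ∂G := rfl
    rw [he]
    exact h
  rw [hmix.deriv]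
  -- positivity of mixDens
  set I : ℝ := ∫ θ, F y θ ∂G with hI
  have hF'int : Integrable (F' y) G := by
    refine Integrable.mono' (integrable_const ((|y| + c) / σ ^ 2)) ((hF'cont y).aestronglyMeasurable) ?_
    filter_upwards [hsupp] with θ hθ
    have hφ : stdNormalPDF ((y - θ) / σ) ≤ 1 := stdNormalPDF_le_one _
    have hφ0 : 0 < stdNormalPDF ((y - θ) / σ) := stdNormalPDF_pos _
    have h2 : |θ| ≤ c := abs_le.2 ⟨hθ.1, hθ.2⟩
    have hub : |y - θ| ≤ |y| + c := by
      calc |y - θ| ≤ |y| + |θ| := abs_sub _ _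
        _ ≤ |y| + c := by linarith
    rw [Real.norm_eq_abs, hF', abs_mul, abs_of_pos hφ0]
    calc |(-(y - θ) / σ ^ 2)| * stdNormalPDF ((y - θ) / σ)
        ≤ |(-(y - θ) / σ ^ 2)| * 1 := mul_le_mul_of_nonneg_left hφ (abs_nonneg _)
      _ = |y - θ| / σ ^ 2 := by
          rw [mul_one, abs_div, abs_neg, abs_of_pos (by positivity : (0:ℝ) < σ ^ 2)]
      _ ≤ (|y| + c) / σ ^ 2 := by gcongr
  have hIpos : 0 < I := by
    set ε : ℝ := stdNormalPDF ((|y| + c) / σ) with hε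
    have hεpos : 0 < ε := stdNormalPDF_pos _
    have hle : ∀ᵐ θ ∂G, ε ≤ F y θ := by
      filter_upwards [hsupp] with θ hθ
      apply stdNormalPDF_mono
      have h2 : |θ| ≤ c := abs_le.2 ⟨hθ.1, hθ.2⟩
      have hub : |y - θ| ≤ |y| + c := by
        have h3 : |y - θ| ≤ |y| + |θ| := by
          simpa [sub_eq_add_neg] using abs_add_le y (-θ)
        linarith
      rw [abs_div, abs_div, abs_of_pos hσ,
        abs_of_nonneg (by positivity : (0:ℝ) ≤ |y| + c)]
      gcongr
    have : ε = ∫ _θ, ε ∂G := by simp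
    calc (0:ℝ) < ε := hεpos
      _ = ∫ _θ, ε ∂G := this
      _ ≤ I := integral_mono_ae (integrable_const ε) (hFint y) hle
  have hmixpos : 0 < mixDens σ G y := by
    rw [mixDens]
    exact mul_pos (by positivity) hIpos
  -- the main bound
  have habs : |(1 / σ) * ∫ θ, F' y θ ∂G| ≤ ((|y| + c) / σ ^ 2) * mixDens σ G y := by
    rw [abs_mul, abs_of_pos (by positivity : (0:ℝ) < 1 / σ)]
    have h1 : |∫ θ, F' y θ ∂G| ≤ ∫ θ, ((|y| + c) / σ ^ 2) * F y θ ∂G := by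
      have habs0 : |∫ θ, F' y θ ∂G| ≤ ∫ θ, |F' y θ| ∂G := by
        simpa [Real.norm_eq_abs] using
          norm_integral_le_integral_norm (μ := G) (F' y)
      refine habs0.trans ?_
      apply integral_mono_ae hF'int.abs ((hFint y).const_mul _)
      filter_upwards [hsupp] with θ hθ
      have hφ0 : 0 < stdNormalPDF ((y - θ) / σ) := stdNormalPDF_pos _
      have h2 : |θ| ≤ c := abs_le.2 ⟨hθ.1, hθ.2⟩
      have hub : |y - θ| ≤ |y| + c := by
        have h3 : |y - θ| ≤ |y| + |θ| := by
          simpa [sub_eq_add_neg] using abs_add_le y (-θ)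
        linarith
      rw [hF', abs_mul, abs_of_pos hφ0]
      apply mul_le_mul_of_nonneg_right ?_ hφ0.le
      rw [abs_div, abs_neg, abs_of_pos (by positivity : (0:ℝ) < σ ^ 2)]
      gcongr
    calc (1 / σ) * |∫ θ, F' y θ ∂G|
        ≤ (1 / σ) * ∫ θ, ((|y| + c) / σ ^ 2) * F y θ ∂G := by
          apply mul_le_mul_of_nonneg_left h1 (by positivity)
      _ = ((|y| + c) / σ ^ 2) * ((1 / σ) * I) := by
          rw [integral_const_mul]; ring
      _ = ((|y| + c) / σ ^ 2) * mixDens σ G y := by rw [mixDens, hI]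
  -- conclude
  have hdivabs : |(1 / σ) * ∫ θ, F' y θ ∂G| / mixDens σ G y ≤ (|y| + c) / σ ^ 2 :=
    (div_le_iff₀ hmixpos).2 habs
  have h1 : ((1 / σ) * (∫ θ, F' y θ ∂G) / mixDens σ G y) ^ 2 ≤ ((|y| + c) / σ ^ 2) ^ 2 := by
    rw [← sq_abs ((1 / σ) * (∫ θ, F' y θ ∂G) / mixDens σ G y)]
    apply pow_le_pow_left₀ (abs_nonneg _) ?_ 2
    rw [abs_div, abs_of_pos hmixpos]
    exact hdivabs
  refine h1.trans ?_
  have h2 : ((|y| + c) / σ ^ 2) ^ 2 = (|y| + c) ^ 2 / σ ^ 4 := by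
    rw [div_pow]; ring_nf
  rw [h2, div_le_div_iff₀ (by positivity) (by positivity)]
  have : (|y| + c) ^ 2 ≤ 2 * (y ^ 2 + c ^ 2) := by
    nlinarith [sq_abs y, sq_nonneg (|y| - c), abs_nonneg y]
  nlinarith [pow_pos hσ 4]
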